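/- Let x₀ ~ N(μ₀, Σ₀) in ℝ^d, y = H x₀ + n with n ~ N(0, σ_y² I) independent of x₀, and x_t = √ᾱ x₀ + √(1-ᾱ) ε with ε ~ N(0, I) independent of x₀ and n. Then the maximizer of x₀ ↦ log p(x₀ | x_t, y) is x₀* = ((1-ᾱ) Σ₀ Hᵀ H + σ_y² ᾱ Σ₀ + σ_y² (1-ᾱ) I)⁻¹ ((1-ᾱ) Σ₀ Hᵀ y + σ_y² √ᾱ Σ₀ x_t + σ_y² (1-ᾱ) μ₀). -/

import Mathlib

open Matrix

/-- the MAP estimator of `x₀` given `(x_t, y)` under a Gaussian prior, linear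
Gaussian measurements and the diffusion forward marginal. The negative log posterior is
(up to additive constants)
`(1/(2σ_y²))‖y - H x₀‖² + (1/(2(1-ᾱ)))‖x_t - √ᾱ x₀‖² + (1/2)(x₀-μ₀)ᵀ Σ₀⁻¹ (x₀-μ₀)`,
and its minimizer is the stated closed form. -/
theorem map_estimator_posterior
    (d m : ℕ) (μ₀ : Fin d → ℝ) (S0 : Matrix (Fin d) (Fin d) ℝ) (hS0 : S0.PosDef)
    (H : Matrix (Fin m) (Fin d) ℝ) (σy : ℝ) (hσ : 0 < σy)
    (abar : ℝ) (hα0 : 0 < abar) (hα1 : abar < 1)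
    (y : Fin m → ℝ) (xt : Fin d → ℝ)
    (negLogPost : (Fin d → ℝ) → ℝ)
    (hf : negLogPost = fun x =>
      (1 / (2 * σy ^ 2)) * ((y - H.mulVec x) ⬝ᵥ (y - H.mulVec x))
      + (1 / (2 * (1 - abar))) *
          ((xt - Real.sqrt abar • x) ⬝ᵥ (xt - Real.sqrt abar • x))
      + (1 / 2) * ((x - μ₀) ⬝ᵥ S0⁻¹.mulVec (x - μ₀)))
    (xstar : Fin d → ℝ)
    (hxstar : xstar =
      ((1 - abar) • (S0 * Hᵀ * H) + (σy ^ 2 * abar) • S0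
        + (σy ^ 2 * (1 - abar)) • (1 : Matrix (Fin d) (Fin d) ℝ))⁻¹.mulVec
        ((1 - abar) • (S0 * Hᵀ).mulVec y + (σy ^ 2 * Real.sqrt abar) • S0.mulVec xt
          + (σy ^ 2 * (1 - abar)) • μ₀)) :
    ∀ x : Fin d → ℝ, negLogPost xstar ≤ negLogPost x := by
  have h1 : (0:ℝ) < 1 - abar := by linarith
  have h1' : (1:ℝ) - abar ≠ 0 := h1.ne'
  have h2 : σy ^ 2 ≠ 0 := by positivity
  obtain ⟨s, hs, hs2⟩ : ∃ s : ℝ, Real.sqrt abar = s ∧ s ^ 2 = abar :=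
    ⟨_, rfl, Real.sq_sqrt hα0.le⟩
  rw [hs] at hf hxstar
  set A : Matrix (Fin d) (Fin d) ℝ :=
    (σy ^ 2)⁻¹ • (Hᵀ * H) + (abar / (1 - abar)) • (1 : Matrix (Fin d) (Fin d) ℝ) + S0⁻¹ with hAdef
  set b : Fin d → ℝ :=
    (σy ^ 2)⁻¹ • Hᵀ.mulVec y + (s / (1 - abar)) • xt + S0⁻¹.mulVec μ₀ with hbdef
  -- A is positive definite
  have hA : A.PosDef := by
    have hB : ((σy ^ 2)⁻¹ • (Hᵀ * H)
        + (abar / (1 - abar)) • (1 : Matrix (Fin d) (Fin d) ℝ)).PosSemidef := by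
      refine Matrix.PosSemidef.of_dotProduct_mulVec_nonneg ?_ ?_
      · unfold Matrix.IsHermitian
        have hherm : (Hᵀ * H).IsHermitian := (Matrix.posSemidef_conjTranspose_mul_self H).1
        simp [Matrix.conjTranspose_add, Matrix.conjTranspose_smul, hherm.eq,
          Matrix.conjTranspose_one]
      · intro x
        simp only [Matrix.add_mulVec, dotProduct_add, Matrix.smul_mulVec, dotProduct_smul,
          smul_eq_mul, Matrix.one_mulVec]
        have hq := (Matrix.posSemidef_conjTranspose_mul_self H).dotProduct_mulVec_nonneg x
        simp only [star_trivial] at hq ⊢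
        have h3 : (0:ℝ) ≤ x ⬝ᵥ x := by simpa using dotProduct_star_self_nonneg x
        have he : (Hᴴ : Matrix (Fin d) (Fin m) ℝ) = Hᵀ := rfl
        rw [he] at hq
        positivity
    exact Matrix.PosDef.posSemidef_add hB hS0.inv
  have hAunit : IsUnit A.det := hA.det_pos.ne'.isUnit
  have hS0unit : IsUnit S0.det := hS0.det_pos.ne'.isUnit
  have hSinv : S0 * S0⁻¹ = 1 := Matrix.mul_nonsing_inv S0 hS0unit
  have hSinv' : S0⁻¹ * S0 = 1 := Matrix.nonsing_inv_mul S0 hS0unit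
  have hS0invsym : (S0⁻¹)ᵀ = S0⁻¹ := by
    have := hS0.inv.isHermitian.eq
    simpa using this
  have hAsym : Aᵀ = A := by
    have := hA.isHermitian.eq
    simpa using this
  have hc : (σy ^ 2 * (1 - abar)) ≠ 0 := mul_ne_zero h2 h1'
  -- xstar solves A x = b
  have hsolve : A.mulVec xstar = b := by
    have hM : (1 - abar) • (S0 * Hᵀ * H) + (σy ^ 2 * abar) • S0
        + (σy ^ 2 * (1 - abar)) • (1 : Matrix (Fin d) (Fin d) ℝ)
        = (σy ^ 2 * (1 - abar)) • (S0 * A) := by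
      rw [hAdef, Matrix.mul_add, Matrix.mul_add, hSinv, Matrix.mul_smul, Matrix.mul_smul,
        Matrix.mul_one, smul_add, smul_add, smul_smul, smul_smul, Matrix.mul_assoc]
      congr 1
      congr 2
      · field_simp
      · field_simp
    have hv : (1 - abar) • (S0 * Hᵀ).mulVec y + (σy ^ 2 * s) • S0.mulVec xt
        + (σy ^ 2 * (1 - abar)) • μ₀
        = (σy ^ 2 * (1 - abar)) • S0.mulVec b := by
      rw [hbdef, Matrix.mulVec_add, Matrix.mulVec_add, Matrix.mulVec_smul, Matrix.mulVec_smul,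
        Matrix.mulVec_mulVec, Matrix.mulVec_mulVec, hSinv, Matrix.one_mulVec, smul_add, smul_add,
        smul_smul, smul_smul]
      congr 2
      · congr 1
        field_simp
      · congr 1
        field_simp
    have hMunit : IsUnit ((1 - abar) • (S0 * Hᵀ * H) + (σy ^ 2 * abar) • S0
        + (σy ^ 2 * (1 - abar)) • (1 : Matrix (Fin d) (Fin d) ℝ)).det := by
      rw [hM, Matrix.det_smul, Matrix.det_mul]
      exact ((isUnit_iff_ne_zero.mpr hc).pow _).mul (hS0unit.mul hAunit)
    have hMx : ((1 - abar) • (S0 * Hᵀ * H) + (σy ^ 2 * abar) • S0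
        + (σy ^ 2 * (1 - abar)) • (1 : Matrix (Fin d) (Fin d) ℝ)).mulVec xstar
        = (1 - abar) • (S0 * Hᵀ).mulVec y + (σy ^ 2 * s) • S0.mulVec xt
          + (σy ^ 2 * (1 - abar)) • μ₀ := by
      rw [hxstar, Matrix.mulVec_mulVec, Matrix.mul_nonsing_inv _ hMunit, Matrix.one_mulVec]
    rw [hM, hv] at hMx
    have h5 : S0.mulVec (A.mulVec xstar) = S0.mulVec b := by
      have h6 : (σy ^ 2 * (1 - abar)) • S0.mulVec (A.mulVec xstar)
          = (σy ^ 2 * (1 - abar)) • S0.mulVec b := by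
        rw [Matrix.mulVec_mulVec]
        rw [Matrix.smul_mulVec] at hMx
        exact hMx
      exact smul_right_injective _ hc h6
    have h7 := congrArg (S0⁻¹.mulVec ·) h5
    simpa [Matrix.mulVec_mulVec, ← Matrix.mul_assoc, hSinv', Matrix.one_mul,
      Matrix.one_mulVec] using h7
  -- quadratic expansion of the objective
  have e1 : ∀ x : Fin d → ℝ, y ⬝ᵥ (H *ᵥ x) = (Hᵀ *ᵥ y) ⬝ᵥ x := by
    intro x
    rw [Matrix.dotProduct_mulVec, Matrix.mulVec_transpose]
  have e2 : ∀ x : Fin d → ℝ, (H *ᵥ x) ⬝ᵥ (H *ᵥ x) = x ⬝ᵥ ((Hᵀ * H) *ᵥ x) := by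
    intro x
    conv_rhs => rw [← Matrix.mulVec_mulVec, Matrix.dotProduct_mulVec, Matrix.vecMul_transpose]
  have e3 : ∀ x : Fin d → ℝ, μ₀ ⬝ᵥ (S0⁻¹ *ᵥ x) = (S0⁻¹ *ᵥ μ₀) ⬝ᵥ x := by
    intro x
    rw [Matrix.dotProduct_mulVec, ← hS0invsym, Matrix.vecMul_transpose, hS0invsym]
  set K : ℝ := (1 / (2 * σy ^ 2)) * (y ⬝ᵥ y) + (1 / (2 * (1 - abar))) * (xt ⬝ᵥ xt)
      + (1 / 2) * (μ₀ ⬝ᵥ (S0⁻¹ *ᵥ μ₀)) with hK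
  have hexp : ∀ x : Fin d → ℝ,
      negLogPost x = (1/2) * (x ⬝ᵥ A.mulVec x) - b ⬝ᵥ x + K := by
    intro x
    rw [hf]
    simp only [hAdef, hbdef, hK, Matrix.add_mulVec, Matrix.smul_mulVec, Matrix.one_mulVec,
      dotProduct_add, dotProduct_smul, add_dotProduct, smul_dotProduct, smul_eq_mul,
      dotProduct_sub, sub_dotProduct, Matrix.mulVec_sub]
    rw [e2 x, dotProduct_comm (H *ᵥ x) y, e1 x, e3 x,
      dotProduct_comm x (S0⁻¹ *ᵥ μ₀), dotProduct_comm x xt]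
    rw [← hs2]
    have h1s : (1:ℝ) - s ^ 2 ≠ 0 := by rw [hs2]; exact h1'
    field_simp
    ring
  -- conclude
  intro x
  have hnn : 0 ≤ (x - xstar) ⬝ᵥ A *ᵥ (x - xstar) := by
    have := hA.posSemidef.dotProduct_mulVec_nonneg (x - xstar)
    simpa using this
  have hAx : x ⬝ᵥ A *ᵥ xstar = b ⬝ᵥ x := by
    rw [hsolve, dotProduct_comm]
  have hAx' : xstar ⬝ᵥ A *ᵥ x = b ⬝ᵥ x := by
    rw [Matrix.dotProduct_mulVec, ← hAsym, Matrix.vecMul_transpose, hsolve]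
  have hAxs : xstar ⬝ᵥ A *ᵥ xstar = b ⬝ᵥ xstar := by
    rw [hsolve, dotProduct_comm]
  have hsplit : (x - xstar) ⬝ᵥ A *ᵥ (x - xstar)
      = x ⬝ᵥ A *ᵥ x - 2 * (b ⬝ᵥ x) + b ⬝ᵥ xstar := by
    simp only [Matrix.mulVec_sub, dotProduct_sub, sub_dotProduct]
    rw [hAx, hAx', hAxs]
    ring
  rw [hexp x, hexp xstar]
  linarith [hnn, hsplit, hAxs]
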